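/- arXiv:1203.1198 — 2 statements merged into one kernel-verified Lean document; each statement's English description precedes it below -/
import Mathlib

section
/- Let G be a group, ℓ : G → ℕ a length function, 𝒫 ⊆ G × G, and let k, p ∈ ℕ with p ≤ k. Let φ : G → ℂ be a finitely supported function whose support is contained in C_k. Define φ^{(p)} : G → ℝ by φ^{(p)}(g) = (Σ_{h ∈ C_p, (g,h) ∈ 𝒫} |φ(gh)|²)^{1/2} for g ∈ C_{k−p} and φ^{(p)}(g) = 0 otherwise, and define ^{(p)}φ : G → ℝ by ^{(p)}φ(g) = (Σ_{h ∈ C_p, (h,g) ∈ 𝒫} |φ(hg)|²)^{1/2} for g ∈ C_{k−p} and ^{(p)}φ(g) = 0 otherwise. Then, for any M ∈ ℕ: if F_{𝒫,k−p,p} ≤ M then Σ_{g∈G} φ^{(p)}(g)² ≤ M · Σ_{g∈G} |φ(g)|², and if F_{𝒫,p,k−p} ≤ M then Σ_{g∈G} (^{(p)}φ)(g)² ≤ M · Σ_{g∈G} |φ(g)|². -/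
namespace ArtinRD

/-- `Fact_{𝒬,k,l}(g)`: permissible factorisations of `g` into a product of elements
of lengths `k` and `l`. -/
def FactSet {G : Type*} [Group G] (ℓ : G → ℕ) (𝒬 : Set (G × G)) (k l : ℕ) (g : G) :
    Set (G × G) :=
  {p | p ∈ 𝒬 ∧ p.1 * p.2 = g ∧ ℓ p.1 = k ∧ ℓ p.2 = l}

theorem aux_bound {G : Type*} (f : G → ℝ) (hf0 : ∀ x, 0 ≤ f x) (s : Finset G)
    (hs : ∀ x, f x ≠ 0 → x ∈ s)
    (Φ : G × G → ℝ)
    (Fact : G → Set (G × G)) (M : ℕ)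
    (hFact : ∀ x ∈ s, (Fact x).Finite ∧ (Fact x).ncard ≤ M)
    (μ : G × G → G)
    (hΦsupp : ∀ q, Φ q ≠ 0 → Φ q = f (μ q) ∧ q ∈ Fact (μ q))
    (hfib : ∀ x q, q ∈ Fact x → μ q = x) :
    ∑' g : G, ∑' h : G, Φ (g, h) ≤ (M : ℝ) * ∑' x : G, f x := by
  classical
  have hU : (⋃ x ∈ (s : Set G), Fact x).Finite := by
    apply Set.Finite.biUnion s.finite_toSet
    intro x hx; exact (hFact x hx).1
  set T : Finset (G × G) := hU.toFinset with hT
  have hmemT : ∀ q, Φ q ≠ 0 → q ∈ T := by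
    intro q hq
    obtain ⟨h1, h2⟩ := hΦsupp q hq
    have hμ : μ q ∈ s := hs _ (by rw [← h1]; exact hq)
    simp only [hT, Set.Finite.mem_toFinset, Set.mem_iUnion]
    exact ⟨μ q, hμ, h2⟩
  have hΦz : ∀ q ∉ T, Φ q = 0 := fun q hq => by
    by_contra h; exact hq (hmemT q h)
  have hsummable : Summable Φ := summable_of_ne_finset_zero hΦz
  have hslice : ∀ g, Summable fun h => Φ (g, h) := by
    intro g
    apply summable_of_ne_finset_zero (s := T.image Prod.snd)
    intro h hh
    by_contra hne
    exact hh (Finset.mem_image.2 ⟨(g, h), hmemT _ hne, rfl⟩)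
  rw [← Summable.tsum_prod' hsummable hslice, tsum_eq_sum hΦz]
  have hmaps : ∀ q ∈ T, μ q ∈ s := by
    intro q hq
    simp only [hT, Set.Finite.mem_toFinset, Set.mem_iUnion] at hq
    obtain ⟨x, hx, hqx⟩ := hq
    rwa [hfib x q hqx]
  calc ∑ q ∈ T, Φ q ≤ ∑ q ∈ T, f (μ q) := by
        apply Finset.sum_le_sum
        intro q _
        by_cases h : Φ q = 0
        · rw [h]; exact hf0 _
        · exact le_of_eq (hΦsupp q h).1
    _ = ∑ x ∈ s, ∑ q ∈ T.filter (fun q => μ q = x), f (μ q) :=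
        (Finset.sum_fiberwise_of_maps_to hmaps _).symm
    _ ≤ ∑ x ∈ s, (M : ℝ) * f x := by
        apply Finset.sum_le_sum
        intro x hx
        have : ∑ q ∈ T.filter (fun q => μ q = x), f (μ q)
            = (T.filter (fun q => μ q = x)).card * f x := by
          rw [Finset.sum_congr rfl (fun q hq => by
            rw [(Finset.mem_filter.1 hq).2])]
          simp [Finset.sum_const, nsmul_eq_mul]
        rw [this]
        apply mul_le_mul_of_nonneg_right _ (hf0 x)
        have hsub : T.filter (fun q => μ q = x) ⊆ (hFact x hx).1.toFinset := by
          intro q hq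
          obtain ⟨hqT, hqx⟩ := Finset.mem_filter.1 hq
          simp only [hT, Set.Finite.mem_toFinset, Set.mem_iUnion] at hqT
          obtain ⟨x', hx', hqx'⟩ := hqT
          have : x' = x := by rw [← hfib x' q hqx', hqx]
          subst this
          simpa using hqx'
        have := Finset.card_le_card hsub
        rw [← Set.ncard_eq_toFinset_card _ (hFact x hx).1] at this
        exact_mod_cast this.trans (hFact x hx).2
    _ = (M : ℝ) * ∑ x ∈ s, f x := by rw [Finset.mul_sum]
    _ = (M : ℝ) * ∑' x : G, f x := by
        rw [tsum_eq_sum (fun x hx => by by_contra h; exact hx (hs x h))]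

/-- **Lemma.** If the function `φ` is supported on the sphere `C_k` and the permissible
factorisation numbers `F_{𝒬,k−p,p}` (resp. `F_{𝒬,p,k−p}`) are bounded by `M`, then the
`ℓ²` norms of the derived functions `φ^{(p)}` and `^{(p)}φ` are bounded by `M` times the
`ℓ²` norm of `φ`. -/
theorem l2_bound_of_factorisation_bound
    {G : Type*} [Group G] (ℓ : G → ℕ)
    (hone : ℓ 1 = 0) (hinv : ∀ g : G, ℓ g⁻¹ = ℓ g)
    (hsub : ∀ g h : G, ℓ (g * h) ≤ ℓ g + ℓ h)
    (𝒬 : Set (G × G)) (k p : ℕ) (hpk : p ≤ k)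
    (φ : G →₀ ℂ) (hφ : ∀ g : G, φ g ≠ 0 → ℓ g = k)
    (φp pφ : G → ℝ)
    (hφp : ∀ g : G, φp g = if ℓ g = k - p then
        Real.sqrt (∑' h : {h : G // ℓ h = p ∧ (g, h) ∈ 𝒬}, ‖φ (g * ↑h)‖ ^ 2) else 0)
    (hpφ : ∀ g : G, pφ g = if ℓ g = k - p then
        Real.sqrt (∑' h : {h : G // ℓ h = p ∧ (h, g) ∈ 𝒬}, ‖φ (↑h * g)‖ ^ 2) else 0)
    (M : ℕ) :
    ((∀ g : G, ℓ g = k →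
        (FactSet ℓ 𝒬 (k - p) p g).Finite ∧ (FactSet ℓ 𝒬 (k - p) p g).ncard ≤ M) →
      ∑' g : G, (φp g) ^ 2 ≤ (M : ℝ) * ∑' g : G, ‖φ g‖ ^ 2) ∧
    ((∀ g : G, ℓ g = k →
        (FactSet ℓ 𝒬 p (k - p) g).Finite ∧ (FactSet ℓ 𝒬 p (k - p) g).ncard ≤ M) →
      ∑' g : G, (pφ g) ^ 2 ≤ (M : ℝ) * ∑' g : G, ‖φ g‖ ^ 2) := by
  classical
  set f : G → ℝ := fun x => ‖φ x‖ ^ 2 with hf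
  have hf0 : ∀ x, 0 ≤ f x := fun x => sq_nonneg _
  have hs : ∀ x, f x ≠ 0 → x ∈ φ.support := by
    intro x hx
    apply Finsupp.mem_support_iff.2
    intro h0
    apply hx
    simp [hf, h0]
  constructor
  · intro hyp
    set Φ : G × G → ℝ := fun q =>
      if ℓ q.1 = k - p ∧ ℓ q.2 = p ∧ q ∈ 𝒬 then f (q.1 * q.2) else 0 with hΦ
    have key : ∀ g : G, (φp g) ^ 2 = ∑' h : G, Φ (g, h) := by
      intro g
      by_cases hg : ℓ g = k - p
      · rw [hφp g, if_pos hg,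
          Real.sq_sqrt (tsum_nonneg (fun h => sq_nonneg _))]
        erw [tsum_subtype {h : G | ℓ h = p ∧ (g, h) ∈ 𝒬} (fun h => ‖φ (g * h)‖ ^ 2)]
        apply tsum_congr
        intro h
        simp only [hΦ, Set.indicator_apply, Set.mem_setOf_eq, hg, true_and]
        rfl
      · rw [hφp g, if_neg hg]
        rw [tsum_congr (fun h => show Φ (g, h) = 0 by
          simp only [hΦ]; rw [if_neg (by tauto)])]
        simp
    rw [tsum_congr key]
    refine aux_bound f hf0 φ.support hs Φ (FactSet ℓ 𝒬 (k - p) p) M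
      (fun x hx => hyp x (hφ x (Finsupp.mem_support_iff.1 hx)))
      (fun q => q.1 * q.2) ?_ ?_
    · intro q hq
      simp only [hΦ] at hq
      split_ifs at hq with hc
      · exact ⟨if_pos hc, hc.2.2, rfl, hc.1, hc.2.1⟩
      · exact absurd rfl hq
    · intro x q hq
      exact hq.2.1
  · intro hyp
    set Φ : G × G → ℝ := fun q =>
      if ℓ q.1 = k - p ∧ ℓ q.2 = p ∧ (q.2, q.1) ∈ 𝒬 then f (q.2 * q.1) else 0 with hΦ
    have key : ∀ g : G, (pφ g) ^ 2 = ∑' h : G, Φ (g, h) := by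
      intro g
      by_cases hg : ℓ g = k - p
      · rw [hpφ g, if_pos hg,
          Real.sq_sqrt (tsum_nonneg (fun h => sq_nonneg _))]
        erw [tsum_subtype {h : G | ℓ h = p ∧ (h, g) ∈ 𝒬} (fun h => ‖φ (h * g)‖ ^ 2)]
        apply tsum_congr
        intro h
        simp only [hΦ, Set.indicator_apply, Set.mem_setOf_eq, hg, true_and]
        rfl
      · rw [hpφ g, if_neg hg]
        rw [tsum_congr (fun h => show Φ (g, h) = 0 by
          simp only [hΦ]; rw [if_neg (by tauto)])]
        simp
    rw [tsum_congr key]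
    refine aux_bound f hf0 φ.support hs Φ
      (fun x => Prod.swap ⁻¹' (FactSet ℓ 𝒬 p (k - p) x)) M
      (fun x hx => ?_) (fun q => q.2 * q.1) ?_ ?_
    · obtain ⟨h1, h2⟩ := hyp x (hφ x (Finsupp.mem_support_iff.1 hx))
      constructor
      · rw [← Set.image_swap_eq_preimage_swap]
        exact h1.image _
      · rw [← Set.image_swap_eq_preimage_swap,
          Set.ncard_image_of_injective _ Prod.swap_injective]
        exact h2
    · intro q hq
      simp only [hΦ] at hq
      split_ifs at hq with hc
      · exact ⟨if_pos hc, hc.2.2, rfl, hc.2.1, hc.1⟩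
      · exact absurd rfl hq
    · intro x q hq
      exact hq.2.1

end ArtinRD
end

section
/- Let m ≥ 3 and let g be a positive element of DA(m) with r = d(g). Let w and w' be geodesic words over {x_1, x_2} representing g such that, for some 0 ≤ s ≤ r, both w and w' have the word (_m(x_1,x_2))^s as a prefix and the word (_m(x_1,x_2))^{r−s} as a suffix. Then w = w' as words. -/
namespace ArtinRD

/-- The alternating product `xyxy...` with `m` factors, starting with `x`. -/
def altProd {G : Type*} [Monoid G] : ℕ → G → G → G
  | 0, _, _ => 1
  | n + 1, x, y => x * altProd n y x

/-- The Artin relators determined by a Coxeter-type matrix `M` (`⊤` meaning `∞`). -/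
def artinRels (n : ℕ) (M : Fin n → Fin n → ℕ∞) : Set (FreeGroup (Fin n)) :=
  {r | ∃ i j : Fin n, i ≠ j ∧ ∃ m : ℕ, M i j = (m : ℕ∞) ∧
    r = altProd m (FreeGroup.of i) (FreeGroup.of j) *
        (altProd m (FreeGroup.of j) (FreeGroup.of i))⁻¹}

/-- The Artin group associated to the matrix `M`. -/
abbrev ArtinGroup (n : ℕ) (M : Fin n → Fin n → ℕ∞) : Type := PresentedGroup (artinRels n M)

/-- The standard generator `x_i` of the Artin group. -/
def gen (n : ℕ) (M : Fin n → Fin n → ℕ∞) (i : Fin n) : ArtinGroup n M := PresentedGroup.of i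

/-- The set `A = {x_1^{±1}, ..., x_n^{±1}}` of standard letters. -/
def genSet (n : ℕ) (M : Fin n → Fin n → ℕ∞) : Set (ArtinGroup n M) :=
  {g | ∃ i : Fin n, g = gen n M i ∨ g = (gen n M i)⁻¹}

/-- Word length of `g` with respect to a set `S`: the least `N` such that `g` is a
product of `N` elements of `S`. -/
noncomputable def wordLength {G : Type*} [Group G] (S : Set G) (g : G) : ℕ :=
  sInf {N : ℕ | ∃ w : List G, (∀ a ∈ w, a ∈ S) ∧ w.length = N ∧ w.prod = g}

/-- The word length on an Artin group with respect to the standard letters. -/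
noncomputable def ℓA (n : ℕ) (M : Fin n → Fin n → ℕ∞) : ArtinGroup n M → ℕ :=
  wordLength (genSet n M)

/-- A letter: a generator index together with a sign (`true` = positive). -/
abbrev Letter (n : ℕ) := Fin n × Bool

/-- The group element corresponding to a letter. -/
def toGen (n : ℕ) (M : Fin n → Fin n → ℕ∞) (l : Letter n) : ArtinGroup n M :=
  if l.2 then gen n M l.1 else (gen n M l.1)⁻¹

/-- The group element represented by a word over the letters. -/
def wordElt (n : ℕ) (M : Fin n → Fin n → ℕ∞) (w : List (Letter n)) : ArtinGroup n M :=
  (w.map (toGen n M)).prod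

/-- A word is geodesic if its length equals the word length of the element it represents. -/
def IsGeodesic (n : ℕ) (M : Fin n → Fin n → ℕ∞) (w : List (Letter n)) : Prop :=
  wordLength (genSet n M) (wordElt n M w) = w.length

/-- `h` is a left divisor of `g`: the factorisation `g = h ⬝ (h⁻¹ g)` is geodesic. -/
def IsLeftDiv {G : Type*} [Group G] (ℓ : G → ℕ) (h g : G) : Prop :=
  ℓ h + ℓ (h⁻¹ * g) = ℓ g

/-- `h` is a right divisor of `g`: the factorisation `g = (g h⁻¹) ⬝ h` is geodesic. -/
def IsRightDiv {G : Type*} [Group G] (ℓ : G → ℕ) (h g : G) : Prop :=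
  ℓ (g * h⁻¹) + ℓ h = ℓ g

/-- The two-generator ("dihedral") subgroup `G(i,j)`. -/
def Gij (n : ℕ) (M : Fin n → Fin n → ℕ∞) (i j : Fin n) : Subgroup (ArtinGroup n M) :=
  Subgroup.closure {gen n M i, gen n M j}

/-- The letters `x_i^{±1}, x_j^{±1}` as group elements. -/
def lettersIJ (n : ℕ) (M : Fin n → Fin n → ℕ∞) (i j : Fin n) : Set (ArtinGroup n M) :=
  {gen n M i, (gen n M i)⁻¹, gen n M j, (gen n M j)⁻¹}

/-- The maximal `{x_i,x_j}`-prefix of a word. -/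
def ijPrefix (n : ℕ) (i j : Fin n) (w : List (Letter n)) : List (Letter n) :=
  w.takeWhile (fun l => l.1 == i || l.1 == j)

/-- `h` is a left divisor of `g` lying in `G(i,j)` of maximal word length. -/
def IsMaxLD (n : ℕ) (M : Fin n → Fin n → ℕ∞) (i j : Fin n) (g h : ArtinGroup n M) : Prop :=
  h ∈ Gij n M i j ∧ IsLeftDiv (ℓA n M) h g ∧
    ∀ h' ∈ Gij n M i j, IsLeftDiv (ℓA n M) h' g → ℓA n M h' ≤ ℓA n M h

/-- `h` is a right divisor of `g` lying in `G(i,j)` of maximal word length. -/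
def IsMaxRD (n : ℕ) (M : Fin n → Fin n → ℕ∞) (i j : Fin n) (g h : ArtinGroup n M) : Prop :=
  h ∈ Gij n M i j ∧ IsRightDiv (ℓA n M) h g ∧
    ∀ h' ∈ Gij n M i j, IsRightDiv (ℓA n M) h' g → ℓA n M h' ≤ ℓA n M h

/-- The Coxeter matrix of the dihedral Artin group `DA(m)`. -/
def DMat (m : ℕ) : Fin 2 → Fin 2 → ℕ∞ := fun i j => if i = j then 1 else (m : ℕ∞)

/-- The dihedral Artin group `DA(m) = ⟨x₁, x₂ ∣ ₘ(x₁,x₂) = ₘ(x₂,x₁)⟩`. -/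
abbrev DA (m : ℕ) : Type := ArtinGroup 2 (DMat m)

/-- The word length on `DA(m)` with respect to `{x₁^{±1}, x₂^{±1}}`. -/
noncomputable def ℓD (m : ℕ) : DA m → ℕ := ℓA 2 (DMat m)

/-- The Garside element `Δ = ₘ(x₁,x₂)` of `DA(m)`. -/
def Delta (m : ℕ) : DA m := altProd m (gen 2 (DMat m) 0) (gen 2 (DMat m) 1)

/-- A positive element of `DA(m)`: a product of the generators. -/
def posElt (m : ℕ) (g : DA m) : Prop :=
  g ∈ Submonoid.closure ({gen 2 (DMat m) 0, gen 2 (DMat m) 1} : Set (DA m))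

/-- A negative element of `DA(m)`: a product of the inverses of the generators. -/
def negElt (m : ℕ) (g : DA m) : Prop :=
  g ∈ Submonoid.closure ({(gen 2 (DMat m) 0)⁻¹, (gen 2 (DMat m) 1)⁻¹} : Set (DA m))

/-- `k` is the largest exponent such that `Δ^k` is a left divisor of `g`
(i.e. `d(g) = k` for a positive element `g`). -/
def IsMaxDeltaPow (m : ℕ) (k : ℕ) (g : DA m) : Prop :=
  IsLeftDiv (ℓD m) (Delta m ^ k) g ∧ ∀ k' : ℕ, IsLeftDiv (ℓD m) (Delta m ^ k') g → k' ≤ k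

/-- `k` is the largest exponent such that `Δ^{-k}` is a left divisor of `g`
(i.e. `d(g) = k` for a negative element `g`). -/
def IsMaxNegDeltaPow (m : ℕ) (k : ℕ) (g : DA m) : Prop :=
  IsLeftDiv (ℓD m) ((Delta m)⁻¹ ^ k) g ∧
    ∀ k' : ℕ, IsLeftDiv (ℓD m) ((Delta m)⁻¹ ^ k') g → k' ≤ k

/-- The alternating word of indices of length `r` starting with `a`. -/
def altIdx : ℕ → Fin 2 → Fin 2 → List (Fin 2)
  | 0, _, _ => []
  | n + 1, a, b => a :: altIdx n b a

/-- The element of `DA(m)` represented by a positive word. -/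
def posWordElt (m : ℕ) (w : List (Fin 2)) : DA m := (w.map (gen 2 (DMat m))).prod

/-- A positive word is geodesic if its length is the word length of the element
it represents. -/
def PosGeodesic (m : ℕ) (w : List (Fin 2)) : Prop :=
  wordLength (genSet 2 (DMat m)) (posWordElt m w) = w.length

/-! ### Basic letter combinatorics -/

def flipL : Fin 2 → Fin 2 := fun i => if i = 0 then 1 else 0

@[simp] lemma flipL_flipL (i : Fin 2) : flipL (flipL i) = i := by revert i; decide

def flipN (k : ℕ) (i : Fin 2) : Fin 2 := if k % 2 = 0 then i else flipL i

@[simp] lemma flipN_zero (i : Fin 2) : flipN 0 i = i := rfl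

lemma flipN_of_even {k : ℕ} (h : k % 2 = 0) (i : Fin 2) : flipN k i = i := by
  simp [flipN, h]

lemma flipN_of_odd {k : ℕ} (h : k % 2 = 1) (i : Fin 2) : flipN k i = flipL i := by
  simp [flipN, h]

lemma flipN_succ (k : ℕ) (i : Fin 2) : flipN (k+1) i = flipN k (flipL i) := by
  rcases Nat.mod_two_eq_zero_or_one k with h | h
  · rw [flipN_of_even h, flipN_of_odd (by omega)]
  · rw [flipN_of_odd h, flipN_of_even (by omega), flipL_flipL]

lemma flipN_add (a b : ℕ) (i : Fin 2) : flipN (a+b) i = flipN a (flipN b i) := by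
  rcases Nat.mod_two_eq_zero_or_one a with h | h <;>
    rcases Nat.mod_two_eq_zero_or_one b with h' | h'
  · rw [flipN_of_even h, flipN_of_even h', flipN_of_even (by omega)]
  · rw [flipN_of_even h, flipN_of_odd h', flipN_of_odd (by omega)]
  · rw [flipN_of_odd h, flipN_of_even h', flipN_of_odd (by omega)]
  · rw [flipN_of_odd h, flipN_of_odd h', flipN_of_even (by omega), flipL_flipL]

lemma flipN_flipL (k : ℕ) (i : Fin 2) : flipN k (flipL i) = flipL (flipN k i) := by
  rcases Nat.mod_two_eq_zero_or_one k with h | h <;>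
    simp [flipN_of_even, flipN_of_odd, h]

@[simp] lemma flipN_flipN (k : ℕ) (i : Fin 2) : flipN k (flipN k i) = i := by
  rcases Nat.mod_two_eq_zero_or_one k with h | h <;>
    simp [flipN_of_even, flipN_of_odd, h]

/-! ### Alternating words -/

def altW (n : ℕ) (c : Fin 2) : List (Fin 2) := altIdx n c (flipL c)

@[simp] lemma altW_zero (c : Fin 2) : altW 0 c = [] := rfl

lemma altW_succ (n : ℕ) (c : Fin 2) : altW (n+1) c = c :: altW n (flipL c) := by
  show c :: altIdx n (flipL c) c = _
  rw [altW]
  rw [show altIdx n (flipL c) (flipL (flipL c)) = altIdx n (flipL c) c by rw [flipL_flipL]]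

@[simp] lemma altW_one (c : Fin 2) : altW 1 c = [c] := rfl

@[simp] lemma altW_length (n : ℕ) (c : Fin 2) : (altW n c).length = n := by
  induction n generalizing c with
  | zero => rfl
  | succ n ih => rw [altW_succ]; simp [ih]

lemma altW_append (a b : ℕ) (c : Fin 2) :
    altW (a+b) c = altW a c ++ altW b (flipN a c) := by
  induction a generalizing c with
  | zero => simp
  | succ a ih =>
      have : a + 1 + b = (a + b) + 1 := by omega
      rw [this, altW_succ, altW_succ, ih, List.cons_append]
      rw [show flipN a (flipL c) = flipN (a+1) c from (flipN_succ a c).symm]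

lemma altW_map (g : Fin 2 → Fin 2) (hg : ∀ i, g (flipL i) = flipL (g i)) (n : ℕ) (c : Fin 2) :
    (altW n c).map g = altW n (g c) := by
  induction n generalizing c with
  | zero => simp
  | succ n ih => rw [altW_succ, altW_succ, List.map_cons, ih, hg]

lemma altW_reverse (n : ℕ) (c : Fin 2) :
    (altW (n+1) c).reverse = altW (n+1) (flipN n c) := by
  induction n generalizing c with
  | zero => simp
  | succ n ih =>
      rw [altW_succ, List.reverse_cons, ih]
      rw [show flipN n (flipL c) = flipN (n+1) c from (flipN_succ n c).symm]
      rw [show (n:ℕ)+1+1 = (n+1)+1 from rfl, altW_append (n+1) 1 (flipN (n+1) c)]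
      simp

/-! ### Alternating runs -/

def altRun (e : Fin 2) : List (Fin 2) → ℕ
  | [] => 0
  | x :: xs => if x = e then altRun (flipL e) xs + 1 else 0

lemma take_altRun (e : Fin 2) (z : List (Fin 2)) :
    z.take (altRun e z) = altW (altRun e z) e := by
  induction z generalizing e with
  | nil => simp [altRun]
  | cons x xs ih =>
      by_cases h : x = e
      · subst h
        rw [show altRun x (x :: xs) = altRun (flipL x) xs + 1 by simp [altRun]]
        rw [List.take_succ_cons, ih, altW_succ]
      · rw [show altRun e (x :: xs) = 0 by simp [altRun, h]]
        simp

lemma altW_prefix_iff (n : ℕ) (e : Fin 2) (z : List (Fin 2)) :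
    altW n e <+: z ↔ n ≤ altRun e z := by
  constructor
  · intro h
    induction z generalizing n e with
    | nil =>
        have := List.prefix_nil.mp h
        have : n = 0 := by
          have := congrArg List.length this; simpa using this
        omega
    | cons x xs ih =>
        cases n with
        | zero => omega
        | succ n =>
            rw [altW_succ] at h
            obtain ⟨he, h2⟩ := List.cons_prefix_cons.mp h
            subst he
            rw [show altRun e (e :: xs) = altRun (flipL e) xs + 1 by simp [altRun]]
            have := ih n (flipL e) h2
            omega
  · intro h
    have h1 : altW n e <+: altW (altRun e z) e := by
      rw [show altRun e z = n + (altRun e z - n) by omega, altW_append]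
      exact ⟨_, rfl⟩
    calc altW n e <+: z.take (altRun e z) := by rw [take_altRun]; exact h1
      _ <+: z := List.take_prefix _ _


/-! ### Reduced words, states and the letter action -/

def Red (m : ℕ) (z : List (Fin 2)) : Prop := ∀ c : Fin 2, ¬ altW m c <:+: z

lemma drop_len {α : Type*} (x y : List α) {n : ℕ} (h : x.length = n) :
    (x ++ y).drop n = y := by subst h; exact List.drop_left

lemma take_len {α : Type*} (x y : List α) {n : ℕ} (h : x.length = n) :
    (x ++ y).take n = x := by subst h; exact List.take_left

lemma red_nil {m : ℕ} (hm : 1 ≤ m) : Red m [] := by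
  intro c h
  rcases h with ⟨s, t, hst⟩
  have := congrArg List.length hst
  simp at this
  omega

lemma Red.of_infix {m : ℕ} {y z : List (Fin 2)} (h : y <:+: z) (hz : Red m z) : Red m y :=
  fun c hc => hz c (hc.trans h)

lemma Red.drop {m : ℕ} {z : List (Fin 2)} (hz : Red m z) (k : ℕ) : Red m (z.drop k) :=
  Red.of_infix (List.drop_suffix k z).isInfix hz

lemma Red.tail {m : ℕ} {z : List (Fin 2)} {j : Fin 2} (hz : Red m (j :: z)) : Red m z :=
  Red.of_infix ⟨[j], [], by simp⟩ hz

lemma red_cons' {m : ℕ} {z : List (Fin 2)} {j : Fin 2}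
    (h : ¬ ∃ c, altW m c <+: (j :: z)) (hz : Red m z) : Red m (j :: z) := by
  intro c hc
  rcases List.infix_cons_iff.mp hc with hp | hi
  · exact h ⟨c, hp⟩
  · exact hz c hi

/-- The twisting of letters by conjugation by `Δ^d`. -/
def twz (m : ℕ) (d : ℤ) (i : Fin 2) : Fin 2 :=
  if m % 2 = 0 ∨ d % 2 = 0 then i else flipL i

lemma twz_of_even_m {m : ℕ} (h : m % 2 = 0) (d : ℤ) (i : Fin 2) : twz m d i = i := by
  rw [twz, if_pos (Or.inl h)]

lemma twz_of_even_d {m : ℕ} {d : ℤ} (h : d % 2 = 0) (i : Fin 2) : twz m d i = i := by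
  rw [twz, if_pos (Or.inr h)]

lemma twz_of_odd {m : ℕ} {d : ℤ} (hm : m % 2 = 1) (hd : d % 2 = 1) (i : Fin 2) :
    twz m d i = flipL i := by
  rw [twz, if_neg (by omega)]

lemma twz_add (m : ℕ) (d e : ℤ) (i : Fin 2) :
    twz m (d + e) i = twz m d (twz m e i) := by
  rcases Nat.mod_two_eq_zero_or_one m with hm | hm
  · rw [twz_of_even_m hm, twz_of_even_m hm, twz_of_even_m hm]
  · rcases Int.emod_two_eq_zero_or_one d with hd | hd <;>
      rcases Int.emod_two_eq_zero_or_one e with he | he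
    · rw [twz_of_even_d he, twz_of_even_d hd, twz_of_even_d (by omega)]
    · rw [twz_of_odd hm he, twz_of_even_d hd, twz_of_odd hm (by omega)]
    · rw [twz_of_even_d he, twz_of_odd hm hd, twz_of_odd hm (by omega)]
    · rw [twz_of_odd hm he, twz_of_odd hm hd, twz_of_even_d (by omega), flipL_flipL]

lemma twz_flipL (m : ℕ) (d : ℤ) (i : Fin 2) : twz m d (flipL i) = flipL (twz m d i) := by
  rcases Nat.mod_two_eq_zero_or_one m with hm | hm
  · rw [twz_of_even_m hm, twz_of_even_m hm]
  · rcases Int.emod_two_eq_zero_or_one d with hd | hd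
    · rw [twz_of_even_d hd, twz_of_even_d hd]
    · rw [twz_of_odd hm hd, twz_of_odd hm hd]

lemma twz_flipN (m : ℕ) (d : ℤ) (k : ℕ) (i : Fin 2) :
    twz m d (flipN k i) = flipN k (twz m d i) := by
  rcases Nat.mod_two_eq_zero_or_one k with hk | hk
  · rw [flipN_of_even hk, flipN_of_even hk]
  · rw [flipN_of_odd hk, flipN_of_odd hk, twz_flipL]

lemma twz_succ (m : ℕ) (d : ℤ) (i : Fin 2) : twz m (d + 1) i = twz m d (flipN m i) := by
  rcases Nat.mod_two_eq_zero_or_one m with hm | hm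
  · rw [twz_of_even_m hm, twz_of_even_m hm, flipN_of_even hm]
  · rw [flipN_of_odd hm]
    rcases Int.emod_two_eq_zero_or_one d with hd | hd
    · rw [twz_of_odd hm (by omega), twz_of_even_d hd]
    · rw [twz_of_even_d (by omega), twz_of_odd hm hd, flipL_flipL]

lemma twz_neg_one (m : ℕ) (i : Fin 2) : twz m (-1) i = flipN m i := by
  have h := twz_succ m (-1) (flipN m i)
  rw [show (-1 : ℤ) + 1 = 0 by ring, flipN_flipN, twz_of_even_d (by norm_num)] at h
  exact h.symm

/-- States: `(d, z)` represents the element `Δ^d · z` with `z` a reduced positive word. -/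
abbrev GMs (m : ℕ) : Type := ℤ × {z : List (Fin 2) // Red m z}

open Classical in
/-- Left multiplication by the generator `x_i` on normal forms. -/
noncomputable def muZ (m : ℕ) (i : Fin 2) (s : GMs m) : GMs m :=
  if h : ∃ c, altW m c <+: (twz m s.1 i :: s.2.1) then
    (s.1 + 1, ⟨s.2.1.drop (m-1), s.2.2.drop (m-1)⟩)
  else
    (s.1, ⟨twz m s.1 i :: s.2.1, red_cons' h s.2.2⟩)

noncomputable def stZ (m : ℕ) (w : List (Fin 2)) (s : GMs m) : GMs m :=
  w.foldr (muZ m) s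

def addD (m : ℕ) (j : ℤ) (s : GMs m) : GMs m := (s.1 + j, s.2)

lemma stEq {m : ℕ} {d d' : ℤ} {z z' : List (Fin 2)} {hz : Red m z} {hz' : Red m z'}
    (h1 : d = d') (h2 : z = z') : ((d, ⟨z, hz⟩) : GMs m) = (d', ⟨z', hz'⟩) := by
  subst h1; subst h2; rfl

@[simp] lemma stZ_nil (m : ℕ) (s : GMs m) : stZ m [] s = s := rfl

lemma stZ_cons (m : ℕ) (i : Fin 2) (w : List (Fin 2)) (s : GMs m) :
    stZ m (i :: w) s = muZ m i (stZ m w s) := rfl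

lemma stZ_append (m : ℕ) (u v : List (Fin 2)) (s : GMs m) :
    stZ m (u ++ v) s = stZ m u (stZ m v s) := List.foldr_append

lemma exists_altW_prefix_iff {m : ℕ} (hm : 1 ≤ m) (j : Fin 2) (z : List (Fin 2)) :
    (∃ c, altW m c <+: (j :: z)) ↔ altW (m-1) (flipL j) <+: z := by
  constructor
  · rintro ⟨c, hc⟩
    rw [show m = (m-1)+1 by omega, altW_succ] at hc
    obtain ⟨he, h2⟩ := List.cons_prefix_cons.mp hc
    subst he; exact h2
  · intro h
    refine ⟨j, ?_⟩
    rw [show m = (m-1)+1 by omega, altW_succ]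
    exact List.cons_prefix_cons.mpr ⟨rfl, h⟩

lemma muZ_extract {m : ℕ} {d : ℤ} {z : List (Fin 2)} {hz : Red m z} {i : Fin 2}
    (h : ∃ c, altW m c <+: (twz m d i :: z)) (h' : Red m (z.drop (m-1))) :
    muZ m i ((d, ⟨z, hz⟩) : GMs m) = (d + 1, ⟨z.drop (m-1), h'⟩) := by
  rw [muZ, dif_pos h]

lemma muZ_cons {m : ℕ} {d : ℤ} {z : List (Fin 2)} {hz : Red m z} {i : Fin 2}
    (h : ¬ ∃ c, altW m c <+: (twz m d i :: z)) (h' : Red m (twz m d i :: z)) :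
    muZ m i ((d, ⟨z, hz⟩) : GMs m) = (d, ⟨twz m d i :: z, h'⟩) := by
  rw [muZ, dif_neg h]

/-- Prepending the letters of a word whose juxtaposition stays reduced never extracts `Δ`. -/
lemma stZ_prepend {m : ℕ} (u : List (Fin 2)) {z : List (Fin 2)} {d : ℤ} {hz : Red m z}
    (h : Red m ((u.map (twz m d)) ++ z)) :
    stZ m u ((d, ⟨z, hz⟩) : GMs m) = (d, ⟨u.map (twz m d) ++ z, h⟩) := by
  induction u with
  | nil => exact stEq rfl (by simp)
  | cons i u ih =>
      have hred : Red m (u.map (twz m d) ++ z) := by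
        have : Red m (twz m d i :: (u.map (twz m d) ++ z)) := by
          simpa using h
        exact this.tail
      have hno : ¬ ∃ c, altW m c <+: (twz m d i :: (u.map (twz m d) ++ z)) := by
        rintro ⟨c, hc⟩
        exact h c (by simpa using hc.isInfix)
      have hco : Red m (twz m d i :: (u.map (twz m d) ++ z)) := by simpa using h
      rw [stZ_cons, ih hred, muZ_cons hno hco]
      exact stEq rfl (by simp)

lemma red_altW_append {m : ℕ} (q : ℕ) (f : Fin 2) {z : List (Fin 2)} (hz : Red m z)
    (hrun : q + altRun (flipN q f) z < m) : Red m (altW q f ++ z) := by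
  intro c hc
  obtain ⟨s, t, hst⟩ := hc
  rw [List.append_assoc] at hst
  by_cases hk : q ≤ s.length
  · have h1 : (s ++ (altW m c ++ t)).drop q = (altW q f ++ z).drop q := by rw [hst]
    rw [List.drop_append_of_le_length hk, drop_len _ _ (altW_length q f)] at h1
    exact hz c ⟨s.drop q, t, by rw [List.append_assoc]; exact h1⟩
  · push_neg at hk
    set k := s.length with hkdef
    have h1 : (s ++ (altW m c ++ t)).drop k = (altW q f ++ z).drop k := by rw [hst]
    rw [drop_len _ _ rfl] at h1
    set a := q - k with hadef
    have h2 : (altW q f ++ z).drop k = altW a (flipN k f) ++ z := by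
      rw [show q = k + a by omega, altW_append, List.append_assoc,
        drop_len _ _ (altW_length k f)]
    rw [h2] at h1
    have ham : a < m := by omega
    have hmc : altW m c = altW a c ++ altW (m - a) (flipN a c) := by
      rw [← altW_append]; congr 1; omega
    rw [hmc, List.append_assoc] at h1
    have htake := congrArg (List.take a) h1
    rw [take_len _ _ (altW_length a c), take_len _ _ (altW_length a (flipN k f))] at htake
    have hc_eq : c = flipN k f := by
      have h3 := congrArg List.headI htake
      rw [show a = (a-1)+1 by omega, altW_succ, altW_succ] at h3
      simpa using h3
    have hdrop := congrArg (List.drop a) h1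
    rw [drop_len _ _ (altW_length a c), drop_len _ _ (altW_length a (flipN k f))] at hdrop
    have hpre : altW (m-a) (flipN a c) <+: z := ⟨t, hdrop⟩
    have hle := (altW_prefix_iff _ _ _).mp hpre
    rw [hc_eq, ← flipN_add, show a + k = q by omega] at hle
    omega


/-! ### The key lemma: a full alternating word acts as `Δ` -/

lemma prefix_append_left {α : Type*} {l₁ l₂ : List α} (x : List α) (h : l₁ <+: l₂) :
    x ++ l₁ <+: x ++ l₂ := by
  obtain ⟨t, rfl⟩ := h
  exact ⟨t, by simp⟩

lemma flipN_congr {a b : ℕ} (h : a % 2 = b % 2) (i : Fin 2) : flipN a i = flipN b i := by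
  rcases Nat.mod_two_eq_zero_or_one a with ha | ha
  · rw [flipN_of_even ha, flipN_of_even (by omega)]
  · rw [flipN_of_odd ha, flipN_of_odd (by omega)]

lemma altW_eq_cons {n : ℕ} (h : 1 ≤ n) (c : Fin 2) :
    altW n c = c :: altW (n-1) (flipL c) := by
  obtain ⟨k, rfl⟩ : ∃ k, n = k + 1 := ⟨n-1, by omega⟩
  rw [altW_succ]; simp

lemma altW_eq_split {n t : ℕ} (h : t ≤ n) (c : Fin 2) :
    altW n c = altW t c ++ altW (n - t) (flipN t c) := by
  conv_lhs => rw [show n = t + (n - t) by omega]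
  rw [altW_append]

lemma addD_zero (m : ℕ) (s : GMs m) : addD m 0 s = s := by
  obtain ⟨d, z⟩ := s
  show (d + 0, z) = (d, z)
  rw [add_zero]

lemma stZ_altW_full {m : ℕ} (hm : 1 ≤ m) (c : Fin 2) (s : GMs m) :
    stZ m (altW m c) s = addD m 1 s := by
  obtain ⟨d, z, hz⟩ := s
  set e := twz m (d+1) c with he
  set t := altRun e z with htdef
  have ht : t < m := by
    by_contra hcon
    push_neg at hcon
    have : altW m e <+: z := (altW_prefix_iff _ _ _).mpr (by omega)
    exact hz e this.isInfix
  set c2 := flipN t c with hc2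
  have hsplit : altW m c = altW t c ++ altW (m - t) c2 := by
    rw [← altW_append]; congr 1; omega
  rw [hsplit, stZ_append]
  have hinner : altW (m-t) c2 = c2 :: altW (m-t-1) (flipL c2) := by
    rw [altW_eq_cons (by omega) c2]
  set f := twz m d (flipL c2) with hf
  have hmap : (altW (m-t-1) (flipL c2)).map (twz m d) = altW (m-t-1) f :=
    altW_map _ (twz_flipL m d) _ _
  have hfe : flipN (m-t-1) f = e := by
    rw [hf, ← twz_flipN]
    rw [show flipL (flipN t c) = flipN (t+1) c by rw [flipN_succ, flipN_flipL]]
    rw [← flipN_add, show (m-t-1) + (t+1) = m by omega, ← twz_succ]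
  have hrun : (m-t-1) + altRun (flipN (m-t-1) f) z < m := by
    rw [hfe, ← htdef]; omega
  have hred : Red m (altW (m-t-1) f ++ z) := red_altW_append _ _ hz hrun
  have hred' : Red m ((altW (m-t-1) (flipL c2)).map (twz m d) ++ z) := by
    rw [hmap]; exact hred
  rw [hinner, stZ_cons, stZ_prepend _ hred']
  rw [show ((d, ⟨(altW (m-t-1) (flipL c2)).map (twz m d) ++ z, hred'⟩) : GMs m)
      = ((d, ⟨altW (m-t-1) f ++ z, hred⟩) : GMs m) from stEq rfl (by rw [hmap])]
  have htake : z.take t = altW t e := take_altRun e z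
  have hT : ∃ c0, altW m c0 <+: (twz m d c2 :: (altW (m-t-1) f ++ z)) := by
    refine ⟨twz m d c2, ?_⟩
    rw [altW_eq_cons hm (twz m d c2)]
    refine List.cons_prefix_cons.mpr ⟨rfl, ?_⟩
    rw [show flipL (twz m d c2) = f by rw [hf, twz_flipL]]
    rw [altW_eq_split (show m - t - 1 ≤ m - 1 by omega) f,
      show m - 1 - (m - t - 1) = t by omega, hfe]
    refine prefix_append_left _ ?_
    rw [← htake]
    exact List.take_prefix t z
  rw [muZ_extract hT (hred.drop _)]
  have hdropeq : (altW (m-t-1) f ++ z).drop (m-1) = z.drop t := by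
    rw [show m - 1 = (altW (m-t-1) f).length + t by simp; omega, List.drop_length_add_append]
  rw [show ((d+1, ⟨(altW (m-t-1) f ++ z).drop (m-1), hred.drop _⟩) : GMs m)
      = ((d+1, ⟨z.drop t, hz.drop t⟩) : GMs m) from stEq rfl hdropeq]
  have houter : Red m ((altW t c).map (twz m (d+1)) ++ z.drop t) := by
    rw [altW_map _ (twz_flipL m (d+1)), ← he, ← htake, List.take_append_drop]
    exact hz
  rw [stZ_prepend _ houter]
  exact stEq rfl (by rw [altW_map _ (twz_flipL m (d+1)), ← he, ← htake, List.take_append_drop])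

/-! ### The action by permutations -/

lemma muZ_addD (m : ℕ) (i : Fin 2) (j : ℤ) (s : GMs m) :
    muZ m i (addD m j s) = addD m j (muZ m (twz m j i) s) := by
  obtain ⟨d, z, hz⟩ := s
  have hl : twz m (d + j) i = twz m d (twz m j i) := twz_add m d j i
  by_cases h : ∃ c, altW m c <+: (twz m d (twz m j i) :: z)
  · rw [show addD m j ((d, ⟨z, hz⟩) : GMs m) = ((d + j, ⟨z, hz⟩) : GMs m) from rfl,
      muZ_extract (by rw [hl]; exact h) (hz.drop _), muZ_extract h (hz.drop _)]
    exact stEq (by ring) rfl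
  · have hred : Red m (twz m d (twz m j i) :: z) :=
      red_cons' h hz
    rw [show addD m j ((d, ⟨z, hz⟩) : GMs m) = ((d + j, ⟨z, hz⟩) : GMs m) from rfl,
      muZ_cons (by rw [hl]; exact h) (by rw [hl]; exact hred), muZ_cons h hred]
    exact stEq rfl (by rw [hl])

@[simp] lemma addD_addD (m : ℕ) (j j' : ℤ) (s : GMs m) :
    addD m j (addD m j' s) = addD m (j' + j) s := by
  obtain ⟨d, z⟩ := s
  show (d + j' + j, z) = (d + (j' + j), z)
  rw [add_assoc]

noncomputable def nuZ (m : ℕ) (i : Fin 2) (s : GMs m) : GMs m :=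
  addD m (-1) (stZ m (altW (m-1) (flipN (m-1) i)) s)

lemma nuZ_muZ {m : ℕ} (hm : 1 ≤ m) (i : Fin 2) (s : GMs m) :
    nuZ m i (muZ m i s) = s := by
  rw [nuZ, show muZ m i s = stZ m [i] s from rfl, ← stZ_append]
  have h2 : altW (m-1) (flipN (m-1) i) ++ [i] = altW m (flipN (m-1) i) := by
    rw [altW_eq_split (show m - 1 ≤ m by omega) (flipN (m-1) i),
      show m - (m-1) = 1 by omega, flipN_flipN, altW_one]
  rw [h2, stZ_altW_full hm, addD_addD, show (1 : ℤ) + -1 = 0 by ring, addD_zero]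

lemma muZ_nuZ {m : ℕ} (hm : 1 ≤ m) (i : Fin 2) (s : GMs m) :
    muZ m i (nuZ m i s) = s := by
  rw [nuZ, muZ_addD, twz_neg_one]
  rw [show muZ m (flipN m i) (stZ m (altW (m-1) (flipN (m-1) i)) s)
      = stZ m (flipN m i :: altW (m-1) (flipN (m-1) i)) s from rfl]
  have h3 : flipN m i :: altW (m-1) (flipN (m-1) i) = altW m (flipN m i) := by
    rw [altW_eq_cons hm (flipN m i)]
    congr 2
    rw [show flipL (flipN m i) = flipN (m+1) i by rw [flipN_succ, flipN_flipL]]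
    exact flipN_congr (by omega) i
  rw [h3, stZ_altW_full hm, addD_addD, show (1 : ℤ) + -1 = 0 by ring, addD_zero]

/-! ### The homomorphism to permutations of normal forms -/

noncomputable def permG (m : ℕ) (hm : 1 ≤ m) (i : Fin 2) : Equiv.Perm (GMs m) :=
  ⟨muZ m i, nuZ m i, nuZ_muZ hm i, muZ_nuZ hm i⟩

lemma map_altProd {G H : Type*} [Monoid G] [Monoid H] (f : G →* H) :
    ∀ (n : ℕ) (x y : G), f (altProd n x y) = altProd n (f x) (f y)
  | 0, _, _ => by simp [altProd]
  | n + 1, x, y => by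
      rw [altProd, altProd, map_mul, map_altProd f n y x]

lemma altProd_perm_apply {m : ℕ} (hm : 1 ≤ m) :
    ∀ (n : ℕ) (a b : Fin 2) (s : GMs m),
      (altProd n (permG m hm a) (permG m hm b) : Equiv.Perm (GMs m)) s
        = stZ m (altIdx n a b) s
  | 0, _, _, _ => rfl
  | n + 1, a, b, s => by
      rw [altProd, altIdx, Equiv.Perm.mul_apply, altProd_perm_apply hm n b a s]
      rfl

lemma altIdx_zero_one (m : ℕ) : altIdx m 0 1 = altW m 0 := rfl

lemma altIdx_one_zero (m : ℕ) : altIdx m 1 0 = altW m 1 := rfl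

lemma fin2_cases {i j : Fin 2} (hij : i ≠ j) : (i = 0 ∧ j = 1) ∨ (i = 1 ∧ j = 0) := by
  fin_cases i <;> fin_cases j <;> simp_all

lemma permG_comm {m : ℕ} (hm : 1 ≤ m) (i j : Fin 2) (hij : i ≠ j) :
    (altProd m (permG m hm i) (permG m hm j) : Equiv.Perm (GMs m))
      = altProd m (permG m hm j) (permG m hm i) := by
  apply Equiv.ext
  intro s
  rcases fin2_cases hij with ⟨rfl, rfl⟩ | ⟨rfl, rfl⟩ <;>
    rw [altProd_perm_apply hm, altProd_perm_apply hm] <;>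
    rw [altIdx_zero_one, altIdx_one_zero, stZ_altW_full hm, stZ_altW_full hm]

lemma permG_rels {m : ℕ} (hm : 1 ≤ m) :
    ∀ r ∈ artinRels 2 (DMat m), (FreeGroup.lift (fun i => permG m hm i)) r = 1 := by
  rintro r ⟨i, j, hij, m', hm', rfl⟩
  have hmm : m' = m := by
    have h1 : DMat m i j = (m : ℕ∞) := by
      rw [DMat]; simp [hij]
    rw [h1] at hm'
    exact_mod_cast hm'.symm
  subst hmm
  rw [map_mul, map_inv, map_altProd, map_altProd]
  simp only [FreeGroup.lift_apply_of]
  rw [permG_comm hm i j hij]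
  exact mul_inv_cancel _

noncomputable def phiG (m : ℕ) (hm : 1 ≤ m) : DA m →* Equiv.Perm (GMs m) :=
  PresentedGroup.toGroup (permG_rels hm)

lemma phiG_gen (m : ℕ) (hm : 1 ≤ m) (i : Fin 2) :
    phiG m hm (gen 2 (DMat m) i) = permG m hm i :=
  PresentedGroup.toGroup.of _

lemma phiG_posWordElt (m : ℕ) (hm : 1 ≤ m) :
    ∀ (w : List (Fin 2)) (s : GMs m), phiG m hm (posWordElt m w) s = stZ m w s := by
  intro w
  induction w with
  | nil =>
      intro s
      rw [show posWordElt m [] = 1 from rfl, map_one]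
      rfl
  | cons i u ih =>
      intro s
      have h1 : posWordElt m (i :: u) = gen 2 (DMat m) i * posWordElt m u := by
        rw [posWordElt, posWordElt, List.map_cons, List.prod_cons]
      rw [h1, map_mul, Equiv.Perm.mul_apply, ih s, phiG_gen]
      rfl

/-- Normal form of a positive word. -/
noncomputable def NFs (m : ℕ) (hm : 1 ≤ m) (w : List (Fin 2)) : GMs m :=
  stZ m w ((0 : ℤ), ⟨[], red_nil hm⟩)

lemma NFs_eq_of_posWordElt_eq {m : ℕ} (hm : 1 ≤ m) {w w' : List (Fin 2)}
    (h : posWordElt m w = posWordElt m w') : NFs m hm w = NFs m hm w' := by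
  rw [NFs, NFs, ← phiG_posWordElt m hm, ← phiG_posWordElt m hm, h]
/-! ### The rewriting relation on positive words -/

@[simp] lemma flipL_zero : flipL 0 = 1 := rfl

lemma fin2_eq (c : Fin 2) : c = 0 ∨ c = 1 := by revert c; decide
@[simp] lemma flipL_one : flipL 1 = 0 := rfl

def StepR (m : ℕ) (w₁ w₂ : List (Fin 2)) : Prop :=
  ∃ (p q : List (Fin 2)) (c : Fin 2),
    w₁ = p ++ altW m c ++ q ∧ w₂ = p ++ altW m (flipL c) ++ q

def Rw (m : ℕ) : List (Fin 2) → List (Fin 2) → Prop := Relation.ReflTransGen (StepR m)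

lemma StepR.symm' {m : ℕ} {w₁ w₂ : List (Fin 2)} (h : StepR m w₁ w₂) : StepR m w₂ w₁ := by
  obtain ⟨p, q, c, h1, h2⟩ := h
  exact ⟨p, q, flipL c, h2, by rw [flipL_flipL]; exact h1⟩

lemma Rw.rfl' {m : ℕ} {u : List (Fin 2)} : Rw m u u := Relation.ReflTransGen.refl

lemma Rw.symm {m : ℕ} {u v : List (Fin 2)} (h : Rw m u v) : Rw m v u :=
  @Std.Symm.symm _ (Relation.ReflTransGen (StepR m))
    (@Relation.ReflTransGen.stdSymm _ (StepR m) ⟨fun _ _ hs => hs.symm'⟩) _ _ h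

lemma Rw.trans {m : ℕ} {u v w : List (Fin 2)} (h1 : Rw m u v) (h2 : Rw m v w) : Rw m u w :=
  Relation.ReflTransGen.trans h1 h2

lemma StepR.append {m : ℕ} (p q : List (Fin 2)) {u v : List (Fin 2)} (h : StepR m u v) :
    StepR m (p ++ u ++ q) (p ++ v ++ q) := by
  obtain ⟨p₁, q₁, c, rfl, rfl⟩ := h
  exact ⟨p ++ p₁, q₁ ++ q, c, by simp, by simp⟩

lemma Rw.append {m : ℕ} (p q : List (Fin 2)) {u v : List (Fin 2)} (h : Rw m u v) :
    Rw m (p ++ u ++ q) (p ++ v ++ q) :=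
  Relation.ReflTransGen.lift (fun w => p ++ w ++ q) (fun _ _ hab => hab.append p q) _ _ h

lemma Rw.cons {m : ℕ} (i : Fin 2) {u v : List (Fin 2)} (h : Rw m u v) :
    Rw m (i :: u) (i :: v) := by
  have := h.append [i] []
  simpa using this

lemma StepR.length_eq {m : ℕ} {u v : List (Fin 2)} (h : StepR m u v) : u.length = v.length := by
  obtain ⟨p, q, c, rfl, rfl⟩ := h
  simp

lemma Rw.length_eq {m : ℕ} {u v : List (Fin 2)} (h : Rw m u v) : u.length = v.length := by
  induction h with
  | refl => rfl
  | tail _ hstep ih => rw [ih, hstep.length_eq]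

lemma StepR.stZ_eq {m : ℕ} (hm : 1 ≤ m) {u v : List (Fin 2)} (h : StepR m u v) (s : GMs m) :
    stZ m u s = stZ m v s := by
  obtain ⟨p, q, c, rfl, rfl⟩ := h
  rw [stZ_append, stZ_append, stZ_append, stZ_append, stZ_altW_full hm, stZ_altW_full hm]

lemma Rw.stZ_eq {m : ℕ} (hm : 1 ≤ m) {u v : List (Fin 2)} (h : Rw m u v) (s : GMs m) :
    stZ m u s = stZ m v s := by
  induction h with
  | refl => rfl
  | tail _ hstep ih => rw [ih, hstep.stZ_eq hm]

lemma Rw.NF_eq {m : ℕ} (hm : 1 ≤ m) {u v : List (Fin 2)} (h : Rw m u v) :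
    NFs m hm u = NFs m hm v := h.stZ_eq hm _

/-! ### Invariance of the group element -/

lemma posWordElt_append (m : ℕ) (u v : List (Fin 2)) :
    posWordElt m (u ++ v) = posWordElt m u * posWordElt m v := by
  rw [posWordElt, posWordElt, posWordElt, List.map_append, List.prod_append]

lemma posWordElt_altIdx (m : ℕ) :
    ∀ (n : ℕ) (a b : Fin 2),
      posWordElt m (altIdx n a b) = altProd n (gen 2 (DMat m) a) (gen 2 (DMat m) b)
  | 0, _, _ => rfl
  | n + 1, a, b => by
      rw [altIdx, altProd, ← posWordElt_altIdx m n b a]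
      rw [posWordElt, posWordElt, List.map_cons, List.prod_cons]

lemma delta_rel (m : ℕ) :
    altProd m (gen 2 (DMat m) 0) (gen 2 (DMat m) 1)
      = altProd m (gen 2 (DMat m) 1) (gen 2 (DMat m) 0) := by
  have hmem : (altProd m (FreeGroup.of (0 : Fin 2)) (FreeGroup.of 1)
      * (altProd m (FreeGroup.of 1) (FreeGroup.of 0))⁻¹) ∈ artinRels 2 (DMat m) :=
    ⟨0, 1, by decide, m, by simp [DMat], rfl⟩
  have h1 : PresentedGroup.mk (artinRels 2 (DMat m))
      (altProd m (FreeGroup.of (0 : Fin 2)) (FreeGroup.of 1)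
        * (altProd m (FreeGroup.of 1) (FreeGroup.of 0))⁻¹) = 1 :=
    (QuotientGroup.eq_one_iff _).mpr (Subgroup.subset_normalClosure hmem)
  rw [map_mul, map_inv, mul_inv_eq_one, map_altProd, map_altProd] at h1
  exact h1

lemma posWordElt_altW_rel (m : ℕ) (c : Fin 2) :
    posWordElt m (altW m c) = posWordElt m (altW m (flipL c)) := by
  rcases fin2_eq c with rfl | rfl
  · rw [show altW m 0 = altIdx m 0 1 from rfl, show flipL 0 = 1 from rfl,
      show altW m 1 = altIdx m 1 0 from rfl, posWordElt_altIdx, posWordElt_altIdx]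
    exact delta_rel m
  · rw [show altW m 1 = altIdx m 1 0 from rfl, show flipL 1 = 0 from rfl,
      show altW m 0 = altIdx m 0 1 from rfl, posWordElt_altIdx, posWordElt_altIdx]
    exact (delta_rel m).symm

lemma StepR.posWordElt_eq {m : ℕ} {u v : List (Fin 2)} (h : StepR m u v) :
    posWordElt m u = posWordElt m v := by
  obtain ⟨p, q, c, rfl, rfl⟩ := h
  rw [posWordElt_append, posWordElt_append, posWordElt_append, posWordElt_append,
    posWordElt_altW_rel]

lemma Rw.posWordElt_eq {m : ℕ} {u v : List (Fin 2)} (h : Rw m u v) :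
    posWordElt m u = posWordElt m v := by
  induction h with
  | refl => rfl
  | tail _ hstep ih => rw [ih, hstep.posWordElt_eq]

/-! ### Commutation of words past `Δ` -/

def DW (m k : ℕ) : List (Fin 2) := (List.replicate k (altW m 0)).flatten

@[simp] lemma DW_zero (m : ℕ) : DW m 0 = [] := rfl

lemma DW_succ (m k : ℕ) : DW m (k+1) = DW m k ++ altW m 0 := by
  rw [DW, DW, List.replicate_succ', List.flatten_append]
  simp

lemma DW_succ' (m k : ℕ) : DW m (k+1) = altW m 0 ++ DW m k := by
  rw [DW, DW, List.replicate_succ, List.flatten_cons]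

lemma DW_length (m k : ℕ) : (DW m k).length = k * m := by
  induction k with
  | zero => simp
  | succ k ih => rw [DW_succ, List.length_append, ih, altW_length]; ring

lemma Rw_altW (m : ℕ) (c : Fin 2) : Rw m (altW m c) (altW m 0) := by
  rcases fin2_eq c with rfl | rfl
  · exact Rw.rfl'
  · refine Relation.ReflTransGen.single ⟨[], [], 1, by simp, by simp⟩

lemma comm_letter {m : ℕ} (hm : 1 ≤ m) (i : Fin 2) :
    Rw m ([i] ++ altW m 0) (altW m 0 ++ [flipN m i]) := by
  have h1 : Rw m ([i] ++ altW m 0) ([i] ++ altW m (flipL i)) := by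
    have := ((Rw_altW m (flipL i)).symm).append [i] []
    simpa using this
  have h2 : [i] ++ altW m (flipL i) = altW m i ++ [flipN m i] := by
    rw [show [i] ++ altW m (flipL i) = altW (m+1) i from (altW_succ m i).symm]
    rw [altW_append m 1 i, altW_one]
  have h3 : Rw m (altW m i ++ [flipN m i]) (altW m 0 ++ [flipN m i]) := by
    have := (Rw_altW m i).append [] [flipN m i]
    simpa using this
  exact (h1.trans (h2 ▸ Rw.rfl')).trans h3

lemma comm_word {m : ℕ} (hm : 1 ≤ m) (v : List (Fin 2)) :
    Rw m (v ++ altW m 0) (altW m 0 ++ v.map (flipN m)) := by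
  induction v with
  | nil => simpa using Rw.rfl'
  | cons i v ih =>
      have h1 : Rw m ((i :: v) ++ altW m 0) (i :: (altW m 0 ++ v.map (flipN m))) := by
        have := ih.cons i
        simpa using this
      have h2 : Rw m (([i] ++ altW m 0) ++ v.map (flipN m))
          ((altW m 0 ++ [flipN m i]) ++ v.map (flipN m)) := by
        have := (comm_letter hm i).append [] (v.map (flipN m))
        simpa using this
      refine h1.trans ?_
      have e1 : i :: (altW m 0 ++ v.map (flipN m)) = ([i] ++ altW m 0) ++ v.map (flipN m) := by
        simp
      have e2 : (altW m 0 ++ [flipN m i]) ++ v.map (flipN m)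
          = altW m 0 ++ (i :: v).map (flipN m) := by
        simp
      rw [e1]
      exact h2.trans (e2 ▸ Rw.rfl')

lemma map_twz_zero (m : ℕ) (v : List (Fin 2)) : v.map (twz m 0) = v := by
  have h : twz m 0 = id := funext fun i => twz_of_even_d (by norm_num) i
  rw [h, List.map_id]

lemma comm_DW {m : ℕ} (hm : 1 ≤ m) (k : ℕ) (v : List (Fin 2)) :
    Rw m (v ++ DW m k) (DW m k ++ v.map (twz m (k : ℤ))) := by
  induction k generalizing v with
  | zero =>
      simp only [DW_zero, List.append_nil, List.nil_append, Nat.cast_zero, map_twz_zero]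
      exact Rw.rfl'
  | succ k ih =>
      rw [DW_succ']
      have h1 : Rw m ((v ++ altW m 0) ++ DW m k) ((altW m 0 ++ v.map (flipN m)) ++ DW m k) := by
        have := (comm_word hm v).append [] (DW m k)
        simpa using this
      have h2 : Rw m (altW m 0 ++ (v.map (flipN m) ++ DW m k))
          (altW m 0 ++ (DW m k ++ (v.map (flipN m)).map (twz m (k : ℤ)))) := by
        have := (ih (v.map (flipN m))).append (altW m 0) []
        simpa using this
      have e3 : (v.map (flipN m)).map (twz m (k : ℤ)) = v.map (twz m ((k+1 : ℕ) : ℤ)) := by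
        rw [List.map_map]
        apply List.map_congr_left
        intro i _
        show twz m (k : ℤ) (flipN m i) = twz m ((k+1 : ℕ) : ℤ) i
        have hc : ((k+1 : ℕ) : ℤ) = (k : ℤ) + 1 := by push_cast; ring
        rw [hc, twz_succ]
      have e0 : v ++ (altW m 0 ++ DW m k) = (v ++ altW m 0) ++ DW m k := by simp
      have e1 : (altW m 0 ++ v.map (flipN m)) ++ DW m k
          = altW m 0 ++ (v.map (flipN m) ++ DW m k) := by simp
      rw [e0]
      refine h1.trans ?_
      rw [e1]
      refine h2.trans ?_
      rw [e3]
      simpa using Rw.rfl'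
/-! ### Soundness of the normal form -/

lemma NFs_cons (m : ℕ) (hm : 1 ≤ m) (i : Fin 2) (u : List (Fin 2)) :
    NFs m hm (i :: u) = muZ m i (NFs m hm u) := rfl

lemma NF_sound {m : ℕ} (hm : 1 ≤ m) (w : List (Fin 2)) :
    0 ≤ (NFs m hm w).1 ∧ Rw m w (DW m (NFs m hm w).1.toNat ++ (NFs m hm w).2.1) := by
  induction w with
  | nil =>
      refine ⟨le_refl 0, ?_⟩
      exact Rw.rfl'
  | cons i u ih =>
      obtain ⟨hd, hrw⟩ := ih
      rcases hNF : NFs m hm u with ⟨d, ⟨z, hz⟩⟩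
      rw [hNF] at hd hrw
      simp only at hd hrw
      set k := d.toNat with hk
      have hdk : (k : ℤ) = d := Int.toNat_of_nonneg hd
      have hch1 : Rw m (i :: u) (([i] ++ DW m k) ++ z) := by
        have := hrw.cons i
        simpa using this
      have hch2 : Rw m (([i] ++ DW m k) ++ z) ((DW m k ++ [twz m d i]) ++ z) := by
        have := (comm_DW hm k [i]).append [] z
        rw [hdk] at this
        simpa using this
      have hch3 : Rw m (i :: u) (DW m k ++ ([twz m d i] ++ z)) := by
        refine (hch1.trans hch2).trans ?_
        rw [show (DW m k ++ [twz m d i]) ++ z = DW m k ++ ([twz m d i] ++ z) by simp]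
        exact Rw.rfl'
      rw [NFs_cons m hm, hNF]
      by_cases hX : ∃ c, altW m c <+: (twz m d i :: z)
      · rw [muZ_extract hX (hz.drop (m-1))]
        simp only
        refine ⟨by omega, ?_⟩
        have hT : altW (m-1) (flipL (twz m d i)) <+: z :=
          (exists_altW_prefix_iff hm _ _).mp hX
        obtain ⟨rest, hrest⟩ := hT
        have hdrop : z.drop (m-1) = rest := by
          rw [← hrest, drop_len _ _ (by simp)]
        have hzw : [twz m d i] ++ z = altW m (twz m d i) ++ rest := by
          rw [← hrest, altW_eq_cons hm (twz m d i)]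
          simp
        have hch4 : Rw m (DW m k ++ altW m (twz m d i) ++ rest)
            (DW m k ++ altW m 0 ++ rest) := (Rw_altW m _).append (DW m k) rest
        refine hch3.trans ?_
        rw [show DW m k ++ ([twz m d i] ++ z) = DW m k ++ altW m (twz m d i) ++ rest by
          rw [hzw]; simp]
        refine hch4.trans ?_
        rw [show DW m k ++ altW m 0 ++ rest = DW m ((d+1).toNat) ++ z.drop (m-1) by
          rw [hdrop, show (d+1).toNat = k + 1 by omega, DW_succ]]
        exact Rw.rfl'
      · rw [muZ_cons hX (red_cons' hX hz)]
        simp only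
        refine ⟨hd, ?_⟩
        refine hch3.trans ?_
        exact Rw.rfl'

/-! ### Cancellation -/

lemma muZ_injective {m : ℕ} (hm : 1 ≤ m) (i : Fin 2) :
    Function.Injective (muZ m i) := by
  intro a b hab
  have h1 : nuZ m i (muZ m i a) = nuZ m i (muZ m i b) := by rw [hab]
  rwa [nuZ_muZ hm, nuZ_muZ hm] at h1

lemma rw_of_NF_eq {m : ℕ} (hm : 1 ≤ m) {u v : List (Fin 2)}
    (h : NFs m hm u = NFs m hm v) : Rw m u v := by
  obtain ⟨_, hu⟩ := NF_sound hm u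
  obtain ⟨_, hv⟩ := NF_sound hm v
  rw [h] at hu
  exact hu.trans hv.symm

lemma cancel_cons {m : ℕ} (hm : 1 ≤ m) {i : Fin 2} {u v : List (Fin 2)}
    (h : Rw m (i :: u) (i :: v)) : Rw m u v := by
  have h1 : muZ m i (NFs m hm u) = muZ m i (NFs m hm v) := h.NF_eq hm
  exact rw_of_NF_eq hm (muZ_injective hm i h1)

lemma cancel_prefix {m : ℕ} (hm : 1 ≤ m) (p : List (Fin 2)) {u v : List (Fin 2)}
    (h : Rw m (p ++ u) (p ++ v)) : Rw m u v := by
  induction p with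
  | nil => simpa using h
  | cons i p ih =>
      exact ih (cancel_cons hm (by simpa using h))

lemma altW_reverse' {m : ℕ} (hm : 1 ≤ m) (c : Fin 2) :
    (altW m c).reverse = altW m (flipN (m-1) c) := by
  obtain ⟨n, rfl⟩ : ∃ n, m = n + 1 := ⟨m-1, by omega⟩
  rw [altW_reverse]
  simp

lemma StepR.rev {m : ℕ} (hm : 1 ≤ m) {u v : List (Fin 2)} (h : StepR m u v) :
    StepR m u.reverse v.reverse := by
  obtain ⟨p, q, c, rfl, rfl⟩ := h
  refine ⟨q.reverse, p.reverse, flipN (m-1) c, ?_, ?_⟩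
  · rw [List.reverse_append, List.reverse_append, altW_reverse' hm]
    simp
  · rw [List.reverse_append, List.reverse_append, altW_reverse' hm]
    rw [show flipL (flipN (m-1) c) = flipN (m-1) (flipL c) from (flipN_flipL _ _).symm]
    simp

lemma Rw.rev {m : ℕ} (hm : 1 ≤ m) {u v : List (Fin 2)} (h : Rw m u v) :
    Rw m u.reverse v.reverse :=
  Relation.ReflTransGen.lift List.reverse (fun _ _ hab => hab.rev hm) _ _ h

lemma cancel_suffix {m : ℕ} (hm : 1 ≤ m) (q : List (Fin 2)) {u v : List (Fin 2)}
    (h : Rw m (u ++ q) (v ++ q)) : Rw m u v := by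
  have h1 := h.rev hm
  rw [List.reverse_append, List.reverse_append] at h1
  have h2 := cancel_prefix hm q.reverse h1
  have h3 := h2.rev hm
  simpa using h3

/-! ### Reduced words are alone in their class -/

lemma red_rw_eq {m : ℕ} {u v : List (Fin 2)} (hred : Red m u) (h : Rw m u v) : u = v := by
  rcases Relation.ReflTransGen.cases_head h with rfl | ⟨w, hstep, _⟩
  · rfl
  · obtain ⟨p, q, c, rfl, _⟩ := hstep
    exact absurd ⟨p, q, rfl⟩ (hred c)
/-! ### Length theory via the degree homomorphism -/

def degF : Fin 2 → Multiplicative ℤ := fun _ => Multiplicative.ofAdd 1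

lemma altProd_self {G : Type*} [Monoid G] : ∀ (n : ℕ) (x : G), altProd n x x = x ^ n
  | 0, x => by rw [altProd, pow_zero]
  | n + 1, x => by rw [altProd, altProd_self n x, pow_succ']

lemma deg_rels (m : ℕ) : ∀ r ∈ artinRels 2 (DMat m), (FreeGroup.lift degF) r = 1 := by
  rintro r ⟨i, j, hij, m', hm', rfl⟩
  rw [map_mul, map_inv, map_altProd, map_altProd]
  simp only [FreeGroup.lift_apply_of, degF]
  rw [altProd_self]
  exact mul_inv_cancel _

noncomputable def degD (m : ℕ) : DA m →* Multiplicative ℤ :=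
  PresentedGroup.toGroup (deg_rels m)

lemma degD_gen (m : ℕ) (i : Fin 2) :
    degD m (gen 2 (DMat m) i) = Multiplicative.ofAdd 1 :=
  PresentedGroup.toGroup.of _

lemma deg_list_le (m : ℕ) (lst : List (DA m)) (h : ∀ a ∈ lst, a ∈ genSet 2 (DMat m)) :
    |Multiplicative.toAdd (degD m lst.prod)| ≤ (lst.length : ℤ) := by
  induction lst with
  | nil => simp
  | cons a l ih =>
      have ha := h a List.mem_cons_self
      have hl := ih (fun b hb => h b (List.mem_cons_of_mem a hb))
      rw [List.prod_cons, map_mul]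
      have hdeg : |Multiplicative.toAdd (degD m a)| = 1 := by
        obtain ⟨i, hi | hi⟩ := ha
        · rw [hi, degD_gen]; simp
        · rw [hi, map_inv, degD_gen]; simp
      calc |Multiplicative.toAdd (degD m a * degD m l.prod)|
          = |Multiplicative.toAdd (degD m a) + Multiplicative.toAdd (degD m l.prod)| := rfl
        _ ≤ |Multiplicative.toAdd (degD m a)| + |Multiplicative.toAdd (degD m l.prod)| :=
            abs_add_le _ _
        _ ≤ 1 + l.length := by rw [hdeg]; linarith
        _ = ((a :: l).length : ℤ) := by simp; ring

lemma deg_posWordElt (m : ℕ) (w : List (Fin 2)) :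
    Multiplicative.toAdd (degD m (posWordElt m w)) = (w.length : ℤ) := by
  induction w with
  | nil =>
      rw [show posWordElt m [] = 1 from rfl, map_one]
      simp
  | cons i u ih =>
      rw [show posWordElt m (i :: u) = gen 2 (DMat m) i * posWordElt m u from by
        rw [posWordElt, posWordElt, List.map_cons, List.prod_cons], map_mul]
      have : Multiplicative.toAdd (degD m (gen 2 (DMat m) i) * degD m (posWordElt m u))
          = Multiplicative.toAdd (degD m (gen 2 (DMat m) i))
            + Multiplicative.toAdd (degD m (posWordElt m u)) := rfl
      rw [this, degD_gen, ih]
      simp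
      ring

lemma wordLength_posWordElt (m : ℕ) (w : List (Fin 2)) :
    wordLength (genSet 2 (DMat m)) (posWordElt m w) = w.length := by
  have hub : w.length ∈ {N : ℕ | ∃ lst : List (DA m),
      (∀ a ∈ lst, a ∈ genSet 2 (DMat m)) ∧ lst.length = N ∧ lst.prod = posWordElt m w} := by
    refine ⟨w.map (gen 2 (DMat m)), ?_, by simp, rfl⟩
    intro a ha
    obtain ⟨i, _, rfl⟩ := List.mem_map.mp ha
    exact ⟨i, Or.inl rfl⟩
  have h1 : wordLength (genSet 2 (DMat m)) (posWordElt m w) ≤ w.length := Nat.sInf_le hub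
  have h2 := Nat.sInf_mem (⟨w.length, hub⟩ : Set.Nonempty _)
  obtain ⟨lst, hmem, hlen, hprod⟩ := h2
  have h3 := deg_list_le m lst hmem
  rw [hprod, deg_posWordElt] at h3
  rw [hlen] at h3
  have h4 : (w.length : ℤ) ≤ (wordLength (genSet 2 (DMat m)) (posWordElt m w) : ℤ) := by
    calc (w.length : ℤ) = |(w.length : ℤ)| := (abs_of_nonneg (by positivity)).symm
      _ ≤ _ := h3
  omega

lemma lD_eq (m : ℕ) (x : DA m) : ℓD m x = wordLength (genSet 2 (DMat m)) x := rfl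

lemma Delta_eq_pwe (m : ℕ) : Delta m = posWordElt m (altW m 0) := by
  rw [show altW m 0 = altIdx m 0 1 from rfl, posWordElt_altIdx]
  rfl

lemma Delta_pow_eq_pwe (m : ℕ) (k : ℕ) : Delta m ^ k = posWordElt m (DW m k) := by
  induction k with
  | zero => rw [pow_zero]; rfl
  | succ k ih =>
      rw [pow_succ, ih, DW_succ, posWordElt_append, Delta_eq_pwe]

lemma lD_Delta_pow (m : ℕ) (k : ℕ) : ℓD m (Delta m ^ k) = k * m := by
  rw [lD_eq, Delta_pow_eq_pwe, wordLength_posWordElt, DW_length]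

/-! ### Splitting a word along a prefix and a suffix -/

lemma split3 {α : Type*} {p q w : List α} (hp : p <+: w) (hq : q <:+ w)
    (hlen : p.length + q.length ≤ w.length) : ∃ u, w = p ++ u ++ q := by
  obtain ⟨w1, rfl⟩ := hp
  obtain ⟨t, ht⟩ := hq
  have hlt : p.length ≤ t.length := by
    have := congrArg List.length ht
    simp at this ⊢
    simp at hlen
    omega
  have hdrop := congrArg (List.drop p.length) ht
  rw [List.drop_append_of_le_length hlt, drop_len p w1 rfl] at hdrop
  exact ⟨t.drop p.length, by rw [List.append_assoc, ← hdrop]⟩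

lemma DW_add (m a b : ℕ) : DW m (a + b) = DW m a ++ DW m b := by
  rw [DW, DW, DW, List.replicate_add, List.flatten_append]

/-- **Lemma.** Two positive geodesic words representing the same positive element `g`
of `DA(m)`, both having `Δ^s` as a prefix and `Δ^{d(g)−s}` as a suffix, are equal. -/
theorem positive_geodesic_unique_between_delta_powers
    (m : ℕ) (hm : 3 ≤ m) (g : DA m) (hpos : posElt m g)
    (r : ℕ) (hr : IsMaxDeltaPow m r g)
    (w w' : List (Fin 2))
    (hw : PosGeodesic m w) (hwg : posWordElt m w = g)
    (hw' : PosGeodesic m w') (hw'g : posWordElt m w' = g)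
    (s : ℕ) (hs : s ≤ r)
    (hpre : (List.replicate s (altIdx m 0 1)).flatten <+: w)
    (hsuf : (List.replicate (r - s) (altIdx m 0 1)).flatten <:+ w)
    (hpre' : (List.replicate s (altIdx m 0 1)).flatten <+: w')
    (hsuf' : (List.replicate (r - s) (altIdx m 0 1)).flatten <:+ w') :
    w = w' := by
  have hm1 : 1 ≤ m := by omega
  obtain ⟨hr1, hr2⟩ := hr
  have hP : (List.replicate s (altIdx m 0 1)).flatten = DW m s := rfl
  have hQ : (List.replicate (r - s) (altIdx m 0 1)).flatten = DW m (r - s) := rfl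
  rw [hP] at hpre hpre'
  rw [hQ] at hsuf hsuf'
  have hlg : ℓD m g = w.length := by rw [← hwg]; exact wordLength_posWordElt m w
  have hlg' : ℓD m g = w'.length := by rw [← hw'g]; exact wordLength_posWordElt m w'
  have hrm : r * m ≤ w.length := by
    have h := hr1
    have h' : ℓD m (Delta m ^ r) + ℓD m ((Delta m ^ r)⁻¹ * g) = ℓD m g := h
    rw [lD_Delta_pow, hlg] at h'
    omega
  have hmul : s * m + (r - s) * m = r * m := by
    rw [← add_mul]; congr 1; omega
  have hsplitlen : (DW m s).length + (DW m (r - s)).length ≤ w.length := by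
    rw [DW_length, DW_length]; omega
  have hsplitlen' : (DW m s).length + (DW m (r - s)).length ≤ w'.length := by
    rw [DW_length, DW_length]; omega
  obtain ⟨u, hu⟩ := split3 hpre hsuf hsplitlen
  obtain ⟨u', hu'⟩ := split3 hpre' hsuf' hsplitlen'
  have hpp : posWordElt m w = posWordElt m w' := by rw [hwg, hw'g]
  have hrww : Rw m w w' := rw_of_NF_eq hm1 (NFs_eq_of_posWordElt_eq hm1 hpp)
  have huu' : Rw m u u' := by
    rw [hu, hu'] at hrww
    exact cancel_prefix hm1 (DW m s) (cancel_suffix hm1 (DW m (r - s)) hrww)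
  have hredu : Red m u := by
    by_contra hcon
    unfold Red at hcon
    push_neg at hcon
    obtain ⟨c, hcinf⟩ := hcon
    obtain ⟨p₁, q₁, hpq⟩ := hcinf
    set A0 := altW m 0 with hA0
    set P := DW m s with hPd
    set Q := DW m (r - s) with hQd
    have heqw : w = (P ++ p₁) ++ altW m c ++ (q₁ ++ Q) := by
      rw [hu, ← hpq]; simp
    have hA : Rw m w ((P ++ p₁) ++ A0 ++ (q₁ ++ Q)) := by
      have h0 := (Rw_altW m c).append (P ++ p₁) (q₁ ++ Q)
      rw [← heqw] at h0
      exact h0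
    have hB : Rw m (P ++ (p₁ ++ A0) ++ (q₁ ++ Q))
        (P ++ (A0 ++ p₁.map (flipN m)) ++ (q₁ ++ Q)) :=
      (comm_word hm1 p₁).append P (q₁ ++ Q)
    set v1 := p₁.map (flipN m) ++ q₁ with hv1
    have hC : Rw m ((P ++ A0) ++ (v1 ++ Q) ++ [])
        ((P ++ A0) ++ (Q ++ v1.map (twz m ((r - s : ℕ) : ℤ))) ++ []) :=
      (comm_DW hm1 (r - s) v1).append (P ++ A0) []
    set v2 := v1.map (twz m ((r - s : ℕ) : ℤ)) with hv2
    have hchain : Rw m w (DW m (r + 1) ++ v2) := by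
      refine hA.trans ?_
      rw [show (P ++ p₁) ++ A0 ++ (q₁ ++ Q) = P ++ (p₁ ++ A0) ++ (q₁ ++ Q) by simp]
      refine hB.trans ?_
      rw [show P ++ (A0 ++ p₁.map (flipN m)) ++ (q₁ ++ Q)
          = (P ++ A0) ++ (v1 ++ Q) ++ [] by simp [hv1]]
      refine hC.trans ?_
      rw [show (P ++ A0) ++ (Q ++ v2) ++ [] = DW m (r + 1) ++ v2 by
        rw [hPd, hQd, hA0, show r + 1 = s + (1 + (r - s)) by omega, DW_add, DW_add,
          show DW m 1 = altW m 0 ++ [] from rfl]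
        simp]
      exact Rw.rfl'
    have hgf : g = Delta m ^ (r + 1) * posWordElt m v2 := by
      rw [← hwg, hchain.posWordElt_eq, posWordElt_append, Delta_pow_eq_pwe]
    have hquot : (Delta m ^ (r + 1))⁻¹ * g = posWordElt m v2 := by
      rw [hgf, inv_mul_cancel_left]
    have hlen2 : w.length = (r + 1) * m + v2.length := by
      rw [hchain.length_eq]; simp [DW_length]
    have hld : IsLeftDiv (ℓD m) (Delta m ^ (r + 1)) g := by
      show ℓD m (Delta m ^ (r + 1)) + ℓD m ((Delta m ^ (r + 1))⁻¹ * g) = ℓD m g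
      rw [hquot, lD_Delta_pow, hlg, hlen2, lD_eq, wordLength_posWordElt]
    have := hr2 (r + 1) hld
    omega
  have hueq : u = u' := red_rw_eq hredu huu'
  rw [hu, hu', hueq]

end ArtinRD
end
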